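/- For every even integer p ≥ 2 and every real K ≥ 1 there exist constants C > 0 and c₀ > 0 with the following property. Let A ∈ ℝ^{n×m}, let D ≥ 0 be a real number with D ≤ c₀·‖A‖_p^p, let x ∈ ℝⁿ and y ∈ ℝᵐ satisfy ‖x‖_p = ‖y‖_p and ‖A − xy^⊤‖_p^p ≤ K·D, and let u₀ ∈ ℝⁿ and v₀ ∈ ℝᵐ satisfy ‖A − u₀v₀^⊤‖_p^p ≤ K·D. Then there exist u ∈ ℝⁿ and v ∈ ℝᵐ with uv^⊤ = u₀v₀^⊤ such that ‖u − x‖_p^p · ‖x‖_p^p ≤ C·D and ‖v − y‖_p^p · ‖x‖_p^p ≤ C·D. -/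

import Mathlib

open Finset

lemma aux_rpow_pow {p : ℕ} (hp : 2 ≤ p) {a : ℝ} (ha : 0 ≤ a) :
    (a ^ (1 / (p:ℝ))) ^ p = a := by
  rw [← Real.rpow_natCast (a ^ (1 / (p:ℝ))) p, ← Real.rpow_mul ha, one_div,
    inv_mul_cancel₀ (by positivity), Real.rpow_one]

lemma aux_rpow_pow' {p : ℕ} (hp : 2 ≤ p) {a : ℝ} (ha : 0 ≤ a) :
    (a ^ (1 - 1/(p:ℝ))) ^ p = a ^ (p-1) := by
  rw [← Real.rpow_natCast (a ^ (1 - 1/(p:ℝ))) p, ← Real.rpow_mul ha,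
    ← Real.rpow_natCast a (p-1)]
  congr 1
  have h1 : ((p-1:ℕ):ℝ) = (p:ℝ) - 1 := by
    push_cast [Nat.cast_sub (by omega : 1 ≤ p)]; ring
  have hP : ((p:ℝ)) ≠ 0 := by positivity
  rw [h1]; field_simp

lemma aux_Lp1 {ι : Type*} [Fintype ι] {p : ℕ} (hp : 2 ≤ p) (f g : ι → ℝ) :
    (∑ i, |f i + g i| ^ p) ^ (1/(p:ℝ)) ≤
      (∑ i, |f i| ^ p) ^ (1/(p:ℝ)) + (∑ i, |g i| ^ p) ^ (1/(p:ℝ)) := by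
  have hP1 : (1:ℝ) ≤ (p:ℝ) := by exact_mod_cast hp.trans' (by norm_num)
  have h := Real.Lp_add_le (univ : Finset ι) f g hP1
  simpa [Real.rpow_natCast] using h

lemma aux_Lp2 {ι κ : Type*} [Fintype ι] [Fintype κ] {p : ℕ} (hp : 2 ≤ p)
    (f g : ι → κ → ℝ) :
    (∑ i, ∑ j, |f i j + g i j| ^ p) ^ (1/(p:ℝ)) ≤
      (∑ i, ∑ j, |f i j| ^ p) ^ (1/(p:ℝ)) + (∑ i, ∑ j, |g i j| ^ p) ^ (1/(p:ℝ)) := by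
  have h := aux_Lp1 hp (fun ij : ι × κ => f ij.1 ij.2) (fun ij : ι × κ => g ij.1 ij.2)
  rw [Fintype.sum_prod_type, Fintype.sum_prod_type, Fintype.sum_prod_type] at h
  exact h

lemma aux_holder_dual' {ι : Type*} [Fintype ι] {p : ℕ} (hp : 2 ≤ p)
    (f g : ι → ℝ) :
    (∑ i, f i * g i ^ (p - 1)) ≤
      (∑ i, |f i| ^ p) ^ (1 / (p:ℝ)) * (∑ i, |g i| ^ p) ^ (1 - 1 / (p:ℝ)) := by
  have hP1 : (1:ℝ) < (p:ℝ) := by exact_mod_cast hp.trans_lt' one_lt_two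
  have hpq := Real.HolderConjugate.conjExponent hP1
  set Q := Real.conjExponent (p:ℝ) with hQdef
  have h := Real.inner_le_Lp_mul_Lq (univ : Finset ι) f (fun i => g i ^ (p-1)) hpq
  have hgq : ∀ i : ι, |g i ^ (p-1)| ^ Q = |g i| ^ p := by
    intro i
    rw [abs_pow, ← Real.rpow_natCast |g i| (p-1), ← Real.rpow_mul (abs_nonneg _)]
    have : ((p - 1 : ℕ) : ℝ) = (p:ℝ) - 1 := by
      push_cast [Nat.cast_sub (by omega : 1 ≤ p)]; ring
    rw [this, hpq.sub_one_mul_conj, Real.rpow_natCast]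
  have h2 : (∑ i, |g i ^ (p-1)| ^ Q) = ∑ i, |g i| ^ p :=
    Finset.sum_congr rfl fun i _ => hgq i
  rw [h2] at h
  have h3 : (∑ i, |f i| ^ ((p:ℝ))) = ∑ i, |f i| ^ p := by
    simp [Real.rpow_natCast]
  rw [h3] at h
  calc (∑ i, f i * g i ^ (p - 1)) ≤ _ := h
  _ = (∑ i, |f i| ^ p) ^ (1 / (p:ℝ)) * (∑ i, |g i| ^ p) ^ (1 - 1 / (p:ℝ)) := by
      rw [one_div Q, ← hpq.one_sub_inv, one_div]

lemma aux_holder_dual {ι : Type*} [Fintype ι] {p : ℕ} (hp : 2 ≤ p)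
    (f g : ι → ℝ) :
    |∑ i, f i * g i ^ (p - 1)| ≤
      (∑ i, |f i| ^ p) ^ (1 / (p:ℝ)) * (∑ i, |g i| ^ p) ^ (1 - 1 / (p:ℝ)) := by
  rw [abs_le]
  constructor
  · have := aux_holder_dual' hp (fun i => -f i) g
    simp only [neg_mul, Finset.sum_neg_distrib, abs_neg] at this
    linarith
  · exact aux_holder_dual' hp f g

set_option maxHeartbeats 2000000 in
/-- **Nearby optimal solutions for rank-one ℓ_p low-rank approximation.**  For every even
`p ≥ 2` and `K ≥ 1` there are `C, c₀ > 0` such that: if `D ≤ c₀·‖A‖_p^p`, `x, y` is a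
`K·D`-valued solution with `‖x‖_p = ‖y‖_p`, and `u₀, v₀` is a `K·D`-valued solution, then
there is a refactorization `u, v` of `u₀v₀ᵀ` with
`‖u − x‖_p^p·‖x‖_p^p ≤ C·D` and `‖v − y‖_p^p·‖x‖_p^p ≤ C·D`. -/
theorem rank_one_nearby_optimal (p : ℕ) (hpe : Even p) (hp : 2 ≤ p)
    (K : ℝ) (hK : 1 ≤ K) :
    ∃ C c₀ : ℝ, 0 < C ∧ 0 < c₀ ∧
      ∀ (n m : ℕ) (A : Matrix (Fin n) (Fin m) ℝ) (D : ℝ)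
        (x u₀ : Fin n → ℝ) (y v₀ : Fin m → ℝ),
        0 ≤ D →
        D ≤ c₀ * ∑ i, ∑ j, |A i j| ^ p →
        (∑ i, |x i| ^ p) ^ (1 / (p : ℝ)) = (∑ j, |y j| ^ p) ^ (1 / (p : ℝ)) →
        (∑ i, ∑ j, |A i j - x i * y j| ^ p) ≤ K * D →
        (∑ i, ∑ j, |A i j - u₀ i * v₀ j| ^ p) ≤ K * D →
        ∃ (u : Fin n → ℝ) (v : Fin m → ℝ),
          (∀ i j, u i * v j = u₀ i * v₀ j) ∧
          (∑ i, |u i - x i| ^ p) * (∑ i, |x i| ^ p) ≤ C * D ∧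
          (∑ j, |v j - y j| ^ p) * (∑ i, |x i| ^ p) ≤ C * D := by
  classical
  have hK0 : (0:ℝ) < K := lt_of_lt_of_le one_pos hK
  refine ⟨8^p * K, 1/(K * 8^p), by positivity, by positivity, ?_⟩
  intro n m A D x u₀ y v₀ hD hDc hxy hNh hMh
  by_cases hx0 : (∑ i, |x i| ^ p) = 0
  · refine ⟨u₀, v₀, fun i j => rfl, ?_, ?_⟩ <;>
      (rw [hx0, mul_zero]; positivity)
  -- main case
  have hP1 : (1:ℝ) ≤ (p:ℝ) := by exact_mod_cast hp.trans' (by norm_num)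
  have hP0 : (0:ℝ) < (p:ℝ) := by linarith
  have hpne : p ≠ 0 := by omega
  set Sx := ∑ i, |x i| ^ p with hSx
  have hSxnn : 0 ≤ Sx := by positivity
  have hSxpos : 0 < Sx := lt_of_le_of_ne hSxnn (Ne.symm hx0)
  set Sy := ∑ j, |y j| ^ p with hSy
  have hSynn : 0 ≤ Sy := by positivity
  have hSyx : Sy = Sx := by
    rw [← aux_rpow_pow hp hSynn, ← hxy, aux_rpow_pow hp hSxnn]
  set npA := ∑ i, ∑ j, |A i j| ^ p with hnpA
  have hnpAnn : 0 ≤ npA := by positivity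
  set npE := ∑ i, ∑ j, |x i * y j - u₀ i * v₀ j| ^ p with hnpE
  have hnpEnn : 0 ≤ npE := by positivity
  have h2p : (2:ℝ)^(p-1) * 2 = 2^p := by
    rw [← pow_succ]; congr 1; omega
  -- step 1 : npE ≤ 2^p * (K * D)
  have step1 : npE ≤ 2^p * (K * D) := by
    have hpt : ∀ (a b c : ℝ), |b - c| ^ p ≤ 2^(p-1) * (|a - c| ^ p + |a - b| ^ p) := by
      intro a b c
      calc |b - c| ^ p ≤ (|a - c| + |a - b|) ^ p := by
            apply pow_le_pow_left₀ (abs_nonneg _)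
            calc |b - c| = |(a - c) - (a - b)| := by ring_nf
            _ ≤ |a - c| + |a - b| := abs_sub _ _
      _ ≤ 2^(p-1) * (|a-c|^p + |a-b|^p) := add_pow_le (abs_nonneg _) (abs_nonneg _) p
    calc npE ≤ ∑ i, ∑ j,
        (2:ℝ)^(p-1) * (|A i j - u₀ i * v₀ j|^p + |A i j - x i * y j|^p) :=
          Finset.sum_le_sum fun i _ => Finset.sum_le_sum fun j _ =>
            hpt (A i j) (x i * y j) (u₀ i * v₀ j)
    _ = 2^(p-1) * ((∑ i, ∑ j, |A i j - u₀ i * v₀ j|^p)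
          + (∑ i, ∑ j, |A i j - x i * y j|^p)) := by
        simp [Finset.mul_sum, Finset.sum_add_distrib, mul_add]
    _ ≤ 2^(p-1) * (K*D + K*D) := by
        have h1 : (0:ℝ) ≤ 2^(p-1) := by positivity
        apply mul_le_mul_of_nonneg_left _ h1
        exact add_le_add hMh hNh
    _ = 2^p * (K * D) := by rw [← h2p]; ring
  -- K*D ≤ npA / 8^p
  have hKD : K * D ≤ npA / 8^p := by
    have h1 : K * D ≤ K * (1/(K * 8^p) * npA) := by
      apply mul_le_mul_of_nonneg_left hDc (le_of_lt hK0)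
    calc K * D ≤ K * (1/(K * 8^p) * npA) := h1
    _ = npA / 8^p := by field_simp
  -- step 2 : npA ≤ 2^p * Sx^2
  have h8 : ((8:ℝ)^p) ^ (1/(p:ℝ)) = 8 := by
    rw [← Real.rpow_natCast (8:ℝ) p, ← Real.rpow_mul (by norm_num), one_div,
      mul_inv_cancel₀ (by positivity), Real.rpow_one]
  have h2 : ((2:ℝ)^p) ^ (1/(p:ℝ)) = 2 := by
    rw [← Real.rpow_natCast (2:ℝ) p, ← Real.rpow_mul (by norm_num), one_div,
      mul_inv_cancel₀ (by positivity), Real.rpow_one]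
  have hNxy : (∑ i, ∑ j, |x i * y j| ^ p) = Sx * Sy := by
    rw [hSx, hSy, Finset.sum_mul]
    refine Finset.sum_congr rfl fun i _ => ?_
    rw [Finset.mul_sum]
    refine Finset.sum_congr rfl fun j _ => ?_
    rw [abs_mul, mul_pow]
  have step2 : npA ≤ 2^p * Sx^2 := by
    have hmink := aux_Lp2 hp (fun i j => A i j - x i * y j) (fun i j => x i * y j)
    simp only [sub_add_cancel] at hmink
    rw [hNxy] at hmink
    have hAN : (∑ i, ∑ j, |A i j - x i * y j| ^ p) ^ (1/(p:ℝ)) ≤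
        (npA / 8^p) ^ (1/(p:ℝ)) :=
      Real.rpow_le_rpow (by positivity) (hNh.trans hKD) (by positivity)
    have hdiv : ((npA / 8^p) : ℝ) ^ (1/(p:ℝ)) = npA ^ (1/(p:ℝ)) / 8 := by
      rw [Real.div_rpow hnpAnn (by positivity), h8]
    rw [hdiv] at hAN
    have hkey : npA ^ (1/(p:ℝ)) ≤ 2 * (Sx * Sy) ^ (1/(p:ℝ)) := by
      have h0 : (0:ℝ) ≤ (Sx * Sy) ^ (1/(p:ℝ)) := by positivity
      have h1 : npA ^ (1/(p:ℝ)) ≤ npA ^ (1/(p:ℝ)) / 8 + (Sx * Sy) ^ (1/(p:ℝ)) :=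
        le_trans hmink (by linarith [hAN])
      linarith
    have := pow_le_pow_left₀ (by positivity) hkey p
    rw [mul_pow, aux_rpow_pow hp hnpAnn, aux_rpow_pow hp (by positivity)] at this
    rw [hSyx] at this
    calc npA ≤ 2^p * (Sx * Sx) := this
    _ = 2^p * Sx^2 := by ring
  -- step 3 : npE ≤ Sx^2 / 2^p
  have step3 : npE ≤ Sx^2 / 2^p := by
    have h8e : (8:ℝ)^p = 2^p * 2^p * 2^p := by
      rw [← mul_pow, ← mul_pow]; norm_num
    have h2pos : (0:ℝ) < 2^p := by positivity
    calc npE ≤ 2^p * (K*D) := step1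
    _ ≤ 2^p * (npA / 8^p) := by
        apply mul_le_mul_of_nonneg_left hKD (by positivity)
    _ ≤ 2^p * ((2^p * Sx^2) / 8^p) := by
        gcongr
    _ = Sx^2 / 2^p := by rw [h8e]; field_simp

  -- pointwise identity a * a^(p-1) = |a|^p (p even)
  have hyp : ∀ a : ℝ, a * a^(p-1) = |a|^p := fun a => by
    rw [hpe.pow_abs, ← pow_succ']
    congr 1
    omega
  set c := ∑ j, v₀ j * (y j)^(p-1) with hc
  set t := c / Sx with ht
  set u : Fin n → ℝ := fun i => t * u₀ i with hu
  have hct : c = Sy * t := by rw [hSyx, ht]; field_simp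
  have he' : (∑ i, |x i - u i|^p) = ∑ i, |u i - x i|^p :=
    Finset.sum_congr rfl fun i _ => by rw [abs_sub_comm]
  -- step 4 : row Hölder bound
  have step4 : (∑ i, |u i - x i|^p) * Sx ≤ npE := by
    have hrowbound : ∀ i, |u i - x i|^p * Sy ≤ ∑ j, |x i * y j - u₀ i * v₀ j|^p := by
      intro i
      have hrnn : (0:ℝ) ≤ ∑ j, |x i * y j - u₀ i * v₀ j|^p := by positivity
      have hH := aux_holder_dual hp (fun j => x i * y j - u₀ i * v₀ j) y
      simp only [← hSy] at hH
      have hLHS : (∑ j, (x i * y j - u₀ i * v₀ j) * y j^(p-1)) = Sy * (x i - u i) := by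
        have hterm : ∀ j, (x i * y j - u₀ i * v₀ j) * y j^(p-1)
            = x i * |y j|^p - u₀ i * (v₀ j * y j^(p-1)) := by
          intro j
          rw [← hyp (y j)]; ring
        rw [Finset.sum_congr rfl (fun j _ => hterm j), Finset.sum_sub_distrib,
          ← Finset.mul_sum, ← Finset.mul_sum, ← hSy, ← hc, hct, hu]
        ring
      rw [hLHS, abs_mul, abs_of_nonneg hSynn] at hH
      have hpow := pow_le_pow_left₀ (by positivity) hH p
      rw [mul_pow, mul_pow, aux_rpow_pow hp hrnn, aux_rpow_pow' hp hSynn] at hpow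
      have hSyp : Sy^p = Sy^(p-1) * Sy := by rw [← pow_succ]; congr 1; omega
      rw [hSyp] at hpow
      have h1 : Sy^(p-1) * (|u i - x i|^p * Sy) ≤
          Sy^(p-1) * (∑ j, |x i * y j - u₀ i * v₀ j|^p) := by
        rw [abs_sub_comm]
        calc Sy^(p-1) * (|x i - u i|^p * Sy)
            = Sy^(p-1) * Sy * |x i - u i|^p := by ring
        _ ≤ (∑ j, |x i * y j - u₀ i * v₀ j|^p) * Sy^(p-1) := hpow
        _ = Sy^(p-1) * (∑ j, |x i * y j - u₀ i * v₀ j|^p) := by ring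
      have hSyposp : 0 < Sy^(p-1) := by
        rw [hSyx]; positivity
      exact le_of_mul_le_mul_left h1 hSyposp
    rw [← hSyx, Finset.sum_mul, hnpE]
    exact Finset.sum_le_sum fun i _ => hrowbound i
  have step4b : (∑ i, |u i - x i|^p) ≤ Sx / 2^p := by
    have h' : (∑ i, |u i - x i|^p) * Sx ≤ (Sx / 2^p) * Sx := by
      calc (∑ i, |u i - x i|^p) * Sx ≤ Sx^2/2^p := le_trans step4 step3
      _ = (Sx/2^p)*Sx := by ring
    exact le_of_mul_le_mul_right h' hSxpos
  -- step 5 : lower bound on Su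
  set Su := ∑ i, |u i|^p with hSu
  have hSunn : 0 ≤ Su := by positivity
  have step5 : Sx / 2^p ≤ Su := by
    have hmink := aux_Lp1 hp (fun i => x i - u i) u
    simp only [sub_add_cancel, ← hSx, ← hSu] at hmink
    have h1 : ((∑ i, |x i - u i|^p):ℝ)^(1/(p:ℝ)) ≤ (Sx/2^p)^(1/(p:ℝ)) := by
      apply Real.rpow_le_rpow (by positivity) _ (by positivity)
      rw [he']; exact step4b
    have hdiv2 : ((Sx/2^p):ℝ)^(1/(p:ℝ)) = Sx^(1/(p:ℝ))/2 := by
      rw [Real.div_rpow hSxnn (by positivity), h2]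
    rw [hdiv2] at h1
    have hkey : Sx^(1/(p:ℝ))/2 ≤ Su^(1/(p:ℝ)) := by linarith
    have hfin := pow_le_pow_left₀ (by positivity) hkey p
    rw [div_pow, aux_rpow_pow hp hSxnn, aux_rpow_pow hp hSunn] at hfin
    exact hfin
  have hSupos : 0 < Su := lt_of_lt_of_le (by positivity) step5
  -- t ≠ 0
  have ht0 : t ≠ 0 := by
    intro h0
    have hSu0 : Su = 0 := by
      rw [hSu]
      apply Finset.sum_eq_zero
      intro i _
      rw [hu]
      simp [h0, zero_pow hpne]
    rw [hSu0] at hSupos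
    exact lt_irrefl 0 hSupos
  set v : Fin m → ℝ := fun j => t⁻¹ * v₀ j with hv
  have huv : ∀ i j, u i * v j = u₀ i * v₀ j := by
    intro i j
    show t * u₀ i * (t⁻¹ * v₀ j) = u₀ i * v₀ j
    field_simp
  -- b and its bound
  set b := ∑ i, x i * (u i)^(p-1) with hb
  have hSueq : (∑ i, u i * u i^(p-1)) = Su := by
    rw [hSu]; exact Finset.sum_congr rfl fun i _ => hyp (u i)
  have hSup : Su^p = Su^(p-1) * Su := by rw [← pow_succ]; congr 1; omega
  have hbd : |b - Su|^p * Sx ≤ npE * Su^(p-1) := by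
    have hH := aux_holder_dual hp (fun i => x i - u i) u
    simp only [← hSu] at hH
    have hLHS : (∑ i, (x i - u i) * u i^(p-1)) = b - Su := by
      rw [← hSueq, hb, ← Finset.sum_sub_distrib]
      exact Finset.sum_congr rfl fun i _ => by ring
    rw [hLHS] at hH
    have hpow := pow_le_pow_left₀ (abs_nonneg _) hH p
    rw [mul_pow, aux_rpow_pow hp (by positivity), aux_rpow_pow' hp hSunn] at hpow
    calc |b - Su|^p * Sx ≤ ((∑ i, |x i - u i|^p) * Su^(p-1)) * Sx :=
          mul_le_mul_of_nonneg_right hpow hSxnn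
    _ = ((∑ i, |u i - x i|^p) * Sx) * Su^(p-1) := by rw [he']; ring
    _ ≤ npE * Su^(p-1) := mul_le_mul_of_nonneg_right step4 (by positivity)
  -- column bound
  have hcolbound : ∀ j, Su^(p-1) * (Su * |v j - y j|^p) ≤
      2^(p-1) * ((∑ i, |x i * y j - u₀ i * v₀ j|^p) * Su^(p-1)
        + |y j|^p * |b - Su|^p) := by
    intro j
    have hcjnn : (0:ℝ) ≤ ∑ i, |x i * y j - u₀ i * v₀ j|^p := by positivity
    have hH := aux_holder_dual hp (fun i => x i * y j - u i * v j) u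
    simp only [← hSu] at hH
    have hEeq : (∑ i, |x i * y j - u i * v j|^p) = ∑ i, |x i * y j - u₀ i * v₀ j|^p :=
      Finset.sum_congr rfl fun i _ => by rw [huv i j]
    rw [hEeq] at hH
    have hLHS : (∑ i, (x i * y j - u i * v j) * u i^(p-1)) = y j * b - v j * Su := by
      rw [hb, ← hSueq, Finset.mul_sum, Finset.mul_sum, ← Finset.sum_sub_distrib]
      exact Finset.sum_congr rfl fun i _ => by ring
    rw [hLHS] at hH
    have htri : Su * |v j - y j| ≤
        (∑ i, |x i * y j - u₀ i * v₀ j|^p)^(1/(p:ℝ)) * Su^(1-1/(p:ℝ))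
          + |y j| * |b - Su| := by
      calc Su * |v j - y j| = |(-(y j * b - v j * Su)) + y j * (b - Su)| := by
            rw [show (-(y j * b - v j * Su)) + y j * (b - Su) = Su * (v j - y j) by ring,
              abs_mul, abs_of_nonneg hSunn]
      _ ≤ |(-(y j * b - v j * Su))| + |y j * (b - Su)| := abs_add_le _ _
      _ = |y j * b - v j * Su| + |y j| * |b - Su| := by rw [abs_neg, abs_mul]
      _ ≤ _ := add_le_add_left hH _
    calc Su^(p-1) * (Su * |v j - y j|^p) = (Su * |v j - y j|)^p := by
          rw [mul_pow, hSup]; ring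
    _ ≤ ((∑ i, |x i * y j - u₀ i * v₀ j|^p)^(1/(p:ℝ)) * Su^(1-1/(p:ℝ))
          + |y j| * |b - Su|)^p := pow_le_pow_left₀ (by positivity) htri p
    _ ≤ 2^(p-1) * (((∑ i, |x i * y j - u₀ i * v₀ j|^p)^(1/(p:ℝ)) * Su^(1-1/(p:ℝ)))^p
          + (|y j| * |b - Su|)^p) := add_pow_le (by positivity) (by positivity) p
    _ = 2^(p-1) * ((∑ i, |x i * y j - u₀ i * v₀ j|^p) * Su^(p-1)
          + |y j|^p * |b - Su|^p) := by
        rw [mul_pow, mul_pow, aux_rpow_pow hp hcjnn, aux_rpow_pow' hp hSunn]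
  -- sum the column bounds
  set Sv := ∑ j, |v j - y j|^p with hSv
  have hSvnn : 0 ≤ Sv := by positivity
  have hsum : Su^(p-1) * (Su * Sv) ≤
      2^(p-1) * (npE * Su^(p-1) + Sy * |b - Su|^p) := by
    have h1 := Finset.sum_le_sum (fun j (_ : j ∈ (univ : Finset (Fin m))) => hcolbound j)
    have hL : (∑ j, Su^(p-1) * (Su * |v j - y j|^p)) = Su^(p-1) * (Su * Sv) := by
      rw [hSv, ← Finset.mul_sum, ← Finset.mul_sum]
    have hcj : (∑ j, ∑ i, |x i * y j - u₀ i * v₀ j|^p) = npE := by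
      rw [hnpE, Finset.sum_comm]
    have hR : (∑ j, 2^(p-1) * ((∑ i, |x i * y j - u₀ i * v₀ j|^p) * Su^(p-1)
          + |y j|^p * |b - Su|^p))
        = 2^(p-1) * (npE * Su^(p-1) + Sy * |b - Su|^p) := by
      rw [← Finset.mul_sum, Finset.sum_add_distrib, ← Finset.sum_mul, ← Finset.sum_mul,
        hcj, ← hSy]
    rw [hL, hR] at h1
    exact h1
  -- combine everything for the v bound
  have hfinal_v : Sv * Sx ≤ 4^p * npE := by
    have h2pp : (0:ℝ) < 2^(p-1) := by positivity
    have hSuppos : (0:ℝ) < Su^(p-1) := pow_pos hSupos _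
    -- multiply hsum by Sx and use hbd
    have hA : Su^(p-1) * (Su * Sv) * Sx ≤
        2^(p-1) * (npE * Su^(p-1) * Sx + Sy * (npE * Su^(p-1))) := by
      have h1 := mul_le_mul_of_nonneg_right hsum hSxnn
      calc Su^(p-1) * (Su * Sv) * Sx
          ≤ 2^(p-1) * (npE * Su^(p-1) + Sy * |b - Su|^p) * Sx := h1
      _ = 2^(p-1) * (npE * Su^(p-1) * Sx + Sy * (|b - Su|^p * Sx)) := by ring
      _ ≤ 2^(p-1) * (npE * Su^(p-1) * Sx + Sy * (npE * Su^(p-1))) := by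
          have h3 := mul_le_mul_of_nonneg_left hbd hSynn
          have h4 := add_le_add_right h3 (npE * Su^(p-1) * Sx)
          exact mul_le_mul_of_nonneg_left h4 (by positivity)
    have hB : 2^(p-1) * (npE * Su^(p-1) * Sx + Sy * (npE * Su^(p-1)))
        = Su^(p-1) * (2^p * npE * Sx) := by
      rw [hSyx, ← h2p]; ring
    rw [hB] at hA
    have hC : Su * Sv * Sx ≤ 2^p * npE * Sx := by
      have := le_of_mul_le_mul_left (by
        calc Su^(p-1) * (Su * Sv * Sx) = Su^(p-1) * (Su * Sv) * Sx := by ring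
        _ ≤ Su^(p-1) * (2^p * npE * Sx) := hA) hSuppos
      exact this
    have hD' : Su * Sv ≤ 2^p * npE := le_of_mul_le_mul_right (by
      calc Su * Sv * Sx ≤ 2^p * npE * Sx := hC) hSxpos
    -- Sx ≤ 2^p * Su
    have hE' : Sx ≤ 2^p * Su := by
      have := step5
      have h2pos : (0:ℝ) < 2^p := by positivity
      calc Sx = 2^p * (Sx/2^p) := by field_simp
      _ ≤ 2^p * Su := mul_le_mul_of_nonneg_left step5 (le_of_lt h2pos)
    calc Sv * Sx ≤ Sv * (2^p * Su) := mul_le_mul_of_nonneg_left hE' hSvnn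
    _ = 2^p * (Su * Sv) := by ring
    _ ≤ 2^p * (2^p * npE) := by
        apply mul_le_mul_of_nonneg_left hD' (by positivity)
    _ = 4^p * npE := by rw [show ((4:ℝ)) = 2*2 by norm_num, mul_pow]; ring
  -- conclude
  refine ⟨u, v, huv, ?_, ?_⟩
  · calc (∑ i, |u i - x i|^p) * Sx ≤ npE := step4
    _ ≤ 2^p * (K * D) := step1
    _ ≤ 8^p * K * D := by
        have h28 : (2:ℝ)^p ≤ 8^p := pow_le_pow_left₀ (by norm_num) (by norm_num) p
        have hKD0 : 0 ≤ K * D := mul_nonneg (le_of_lt hK0) hD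
        calc (2:ℝ)^p * (K * D) ≤ 8^p * (K * D) :=
              mul_le_mul_of_nonneg_right h28 hKD0
        _ = 8^p * K * D := by ring
  · calc Sv * Sx ≤ 4^p * npE := hfinal_v
    _ ≤ 4^p * (2^p * (K * D)) := by
        apply mul_le_mul_of_nonneg_left step1 (by positivity)
    _ = 8^p * K * D := by
        rw [show ((8:ℝ)) = 4*2 by norm_num, mul_pow]; ring
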